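/- Let d ≥ 1, let g : ℝ^d → ℝ^d be a Schwartz function, and let the Fourier transform be û(x) = (2π)^{−d/2} ∫_{ℝ^d} e^{−i x·η} u(η) dη. Then for every r > 0 and every a ∈ ℝ^d, |∫_{ℝ^d} e^{−i r |η|²} g(η + a) dη| ≤ (π/r)^{d/2} ‖ĝ‖_{L¹}. -/

import Mathlib

open MeasureTheory Filter Set
open scoped RealInnerProductSpace Topology

noncomputable section

abbrev E (d : ℕ) := EuclideanSpace ℝ (Fin d)

/-- the `i`-th component of the Fourier transform
`ĝ(x) = (2π)^{-d/2} ∫ e^{-ix·η} g(η) dη` of an `ℝ^d`-valued Schwartz function `g`. -/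
def ftSi {d : ℕ} (g : SchwartzMap (E d) (E d)) (i : Fin d) (x : E d) : ℂ :=
  ((2 * Real.pi) ^ (-(d : ℝ) / 2) : ℝ) *
    ∫ η, Complex.exp (-Complex.I * (⟪x, η⟫ : ℝ)) * ((g η i : ℝ) : ℂ)

/-- `‖ĝ‖_{L¹}` (with the euclidean norm of the complex vector `ĝ(x)`). -/
def L1ftS {d : ℕ} (g : SchwartzMap (E d) (E d)) : ℝ :=
  ∫ x, Real.sqrt (∑ i, ‖ftSi g i x‖ ^ 2)

namespace Statement5Aux

open Complex
open scoped FourierTransform Real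

variable {d : ℕ}

/-- complexified `i`-th component of `g` as a Schwartz map. -/
def cComp (g : SchwartzMap (E d) (E d)) (i : Fin d) : SchwartzMap (E d) ℂ :=
  SchwartzMap.bilinLeftCLM ((EuclideanSpace.proj (𝕜 := ℝ) i).smulRight Complex.ofRealCLM)
    (Function.HasTemperateGrowth.const (1 : ℝ)) g

@[simp] lemma cComp_apply (g : SchwartzMap (E d) (E d)) (i : Fin d) (x : E d) :
    cComp g i x = ((g x i : ℝ) : ℂ) := by
  show ((g x i : ℝ) • Complex.ofRealCLM) (1 : ℝ) = _
  simp [Complex.real_smul]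

/-- the Fourier transform (mathlib normalization) of the `i`-th component. -/
def hatC (g : SchwartzMap (E d) (E d)) (i : Fin d) : E d → ℂ := 𝓕 ⇑(cComp g i)

lemma hatC_eq (g : SchwartzMap (E d) (E d)) (i : Fin d) :
    hatC g i = ⇑(SchwartzMap.fourierTransformCLM ℂ (cComp g i)) :=
  rfl

lemma integrable_hatC (g : SchwartzMap (E d) (E d)) (i : Fin d) :
    Integrable (hatC g i) := by
  rw [hatC_eq]; exact SchwartzMap.integrable _

lemma continuous_hatC (g : SchwartzMap (E d) (E d)) (i : Fin d) :
    Continuous (hatC g i) := by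
  rw [hatC_eq]; exact SchwartzMap.continuous _

/-- the full (complexified) Fourier transform as a vector in `ℂ^d`. -/
def Psi (g : SchwartzMap (E d) (E d)) : E d → EuclideanSpace ℂ (Fin d) := fun w =>
  (PiLp.continuousLinearEquiv 2 ℂ (fun _ : Fin d => ℂ)).symm (fun i => hatC g i w)

lemma Psi_apply (g : SchwartzMap (E d) (E d)) (w : E d) (i : Fin d) :
    Psi g w i = hatC g i w := rfl

lemma continuous_Psi (g : SchwartzMap (E d) (E d)) : Continuous (Psi g) :=
  (PiLp.continuousLinearEquiv 2 ℂ (fun _ : Fin d => ℂ)).symm.continuous.comp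
    (continuous_pi fun i => continuous_hatC g i)

lemma norm_Psi (g : SchwartzMap (E d) (E d)) (w : E d) :
    ‖Psi g w‖ = Real.sqrt (∑ i, ‖hatC g i w‖ ^ 2) := by
  rw [EuclideanSpace.norm_eq]
  rfl

lemma norm_Psi_le (g : SchwartzMap (E d) (E d)) (w : E d) :
    ‖Psi g w‖ ≤ ∑ i, ‖hatC g i w‖ := by
  rw [norm_Psi]
  have h : (∑ i, ‖hatC g i w‖ ^ 2) ≤ (∑ i, ‖hatC g i w‖) ^ 2 :=
    Finset.sum_sq_le_sq_sum_of_nonneg (fun i _ => norm_nonneg _)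
  calc Real.sqrt (∑ i, ‖hatC g i w‖ ^ 2) ≤ Real.sqrt ((∑ i, ‖hatC g i w‖) ^ 2) :=
        Real.sqrt_le_sqrt h
    _ = ∑ i, ‖hatC g i w‖ := Real.sqrt_sq (Finset.sum_nonneg fun i _ => norm_nonneg _)

lemma integrable_normPsi (g : SchwartzMap (E d) (E d)) :
    Integrable (fun w => ‖Psi g w‖) := by
  refine Integrable.mono' (integrable_finset_sum (μ := volume) Finset.univ
      (fun i _ => (integrable_hatC g i).norm))
    (continuous_Psi g).norm.aestronglyMeasurable ?_
  filter_upwards with w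
  rw [norm_norm]
  exact norm_Psi_le g w


/-- the kernel appearing after Fourier inversion. -/
def Kb (d : ℕ) (b : ℂ) (a : E d) (w : E d) : ℂ :=
  ((π : ℂ) / b) ^ ((d : ℂ) / 2) * cexp (-(π : ℂ) ^ 2 * ‖w‖ ^ 2 / b) *
    cexp (((2 * π * ⟪w, a⟫ : ℝ) : ℂ) * I)

lemma continuous_Kb (b : ℂ) (a : E d) : Continuous (Kb d b a) := by
  unfold Kb
  apply Continuous.mul
  apply Continuous.mul continuous_const
  · exact Complex.continuous_exp.comp (by fun_prop)
  · refine Complex.continuous_exp.comp (Continuous.mul ?_ continuous_const)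
    exact Complex.continuous_ofReal.comp
      (continuous_const.mul (continuous_id.inner continuous_const))

lemma norm_Kb_le {b : ℂ} (hb : 0 < b.re) {r : ℝ} (hr : 0 < r)
    (hrb : r ≤ ‖b‖) (a w : E d) :
    ‖Kb d b a w‖ ≤ (π / r) ^ ((d : ℝ) / 2) := by
  have hb0 : b ≠ 0 := by
    intro h; rw [h] at hb; simp at hb
  have h1 : ‖((π : ℂ) / b) ^ ((d : ℂ) / 2)‖ ≤ (π / r) ^ ((d : ℝ) / 2) := by
    have hc : ((d : ℂ) / 2) = (((d : ℝ) / 2 : ℝ) : ℂ) := by push_cast; ring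
    rw [hc, Complex.norm_cpow_real]
    refine Real.rpow_le_rpow (by positivity) ?_ (by positivity)
    rw [norm_div, Complex.norm_real, Real.norm_eq_abs, abs_of_pos Real.pi_pos]
    apply div_le_div_of_nonneg_left Real.pi_pos.le hr hrb
  have h2 : ‖cexp (-(π : ℂ) ^ 2 * ‖w‖ ^ 2 / b)‖ ≤ 1 := by
    rw [Complex.norm_exp, Real.exp_le_one_iff]
    have heq : (-(π : ℂ) ^ 2 * ‖w‖ ^ 2 / b) = (((-(π ^ 2 * ‖w‖ ^ 2) : ℝ)) : ℂ) * b⁻¹ := by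
      push_cast; ring
    rw [heq, Complex.re_ofReal_mul]
    have hinv : 0 ≤ (b⁻¹).re := by
      rw [Complex.inv_re]
      have := Complex.normSq_nonneg b
      positivity
    have hneg : (-(π ^ 2 * ‖w‖ ^ 2) : ℝ) ≤ 0 := by
      have : (0:ℝ) ≤ π ^ 2 * ‖w‖ ^ 2 := by positivity
      linarith
    exact mul_nonpos_of_nonpos_of_nonneg hneg hinv
  have h3 : ‖cexp (((2 * π * ⟪w, a⟫ : ℝ) : ℂ) * I)‖ = 1 := by
    rw [Complex.norm_exp_ofReal_mul_I]
  calc ‖Kb d b a w‖ = ‖((π : ℂ) / b) ^ ((d : ℂ) / 2)‖ * ‖cexp (-(π : ℂ) ^ 2 * ‖w‖ ^ 2 / b)‖ *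
        ‖cexp (((2 * π * ⟪w, a⟫ : ℝ) : ℂ) * I)‖ := by rw [Kb, norm_mul, norm_mul]
    _ ≤ (π / r) ^ ((d : ℝ) / 2) * 1 * 1 := by
        have := norm_nonneg (cexp (-(π : ℂ) ^ 2 * ‖w‖ ^ 2 / b))
        have h3' : ‖cexp (((2 * π * ⟪w, a⟫ : ℝ) : ℂ) * I)‖ ≤ 1 := le_of_eq h3
        have h0 : (0:ℝ) ≤ (π / r) ^ ((d : ℝ) / 2) := by positivity
        exact mul_le_mul (mul_le_mul h1 h2 (norm_nonneg _) h0) h3'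
          (norm_nonneg _) (by simpa using h0)
    _ = (π / r) ^ ((d : ℝ) / 2) := by ring


lemma key_identity (g : SchwartzMap (E d) (E d)) (i : Fin d) (a : E d) {b : ℂ}
    (hb : 0 < b.re) :
    ∫ η, cexp (-b * ‖η‖ ^ 2) * cComp g i (η + a)
      = ∫ w, Kb d b a w * hatC g i w := by
  have hinvf : ∀ x : E d, (cComp g i) x
      = ∫ w, cexp (((2 * π * ⟪w, x⟫ : ℝ) : ℂ) * I) • hatC g i w := by
    intro x
    have h := (cComp g i).continuous.fourierInv_fourier_eq (cComp g i).integrable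
      (integrable_hatC g i)
    conv_lhs => rw [← congrFun h x]
    rw [Real.fourierInv_eq']
    rfl
  have hK1 : Integrable (fun v : E d => cexp (-b * ‖v‖ ^ 2)) := by
    simpa using GaussianFourier.integrable_cexp_neg_mul_sq_norm_add (V := E d) hb 0 0
  have hjoint : Integrable (Function.uncurry fun (η : E d) (w : E d) =>
      cexp (-b * ‖η‖ ^ 2) * (cexp (((2 * π * ⟪w, η + a⟫ : ℝ) : ℂ) * I) * hatC g i w))
      (volume.prod volume) := by
    refine Integrable.mono' (hK1.norm.mul_prod (integrable_hatC g i).norm) ?_ ?_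
    · apply Continuous.aestronglyMeasurable
      apply Continuous.mul
      · exact Complex.continuous_exp.comp (by fun_prop)
      · apply Continuous.mul
        · refine Complex.continuous_exp.comp (Continuous.mul ?_ continuous_const)
          refine Complex.continuous_ofReal.comp (continuous_const.mul ?_)
          exact (continuous_snd.inner (continuous_fst.add continuous_const))
        · exact (continuous_hatC g i).comp continuous_snd
    · filter_upwards with p
      simp only [Function.uncurry, norm_mul,
        Complex.norm_exp_ofReal_mul_I, one_mul]
      exact le_refl _
  calc ∫ η, cexp (-b * ‖η‖ ^ 2) * cComp g i (η + a)
      = ∫ η, ∫ w, cexp (-b * ‖η‖ ^ 2) *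
          (cexp (((2 * π * ⟪w, η + a⟫ : ℝ) : ℂ) * I) * hatC g i w) := by
        congr 1; funext η
        rw [hinvf (η + a), ← integral_const_mul]
        simp_rw [smul_eq_mul]
    _ = ∫ w, ∫ η, cexp (-b * ‖η‖ ^ 2) *
          (cexp (((2 * π * ⟪w, η + a⟫ : ℝ) : ℂ) * I) * hatC g i w) :=
        integral_integral_swap hjoint
    _ = ∫ w, Kb d b a w * hatC g i w := by
        congr 1; funext w
        have hsplit : ∀ η : E d, cexp (-b * ‖η‖ ^ 2) *
            (cexp (((2 * π * ⟪w, η + a⟫ : ℝ) : ℂ) * I) * hatC g i w)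
            = cexp (-b * ‖η‖ ^ 2 + (2 * ↑π * I) * ⟪w, η⟫) *
              (cexp (((2 * π * ⟪w, a⟫ : ℝ) : ℂ) * I) * hatC g i w) := by
          intro η
          rw [inner_add_right]
          rw [show (((2 * π * (⟪w, η⟫ + ⟪w, a⟫) : ℝ) : ℂ) * I)
              = ((2 * π * ⟪w, η⟫ : ℝ) : ℂ) * I + ((2 * π * ⟪w, a⟫ : ℝ) : ℂ) * I by
            push_cast; ring]
          rw [Complex.exp_add, show (-b * (‖η‖ : ℂ) ^ 2 + (2 * ↑π * I) * ⟪w, η⟫ : ℂ)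
              = -b * ‖η‖ ^ 2 + (((2 * π * ⟪w, η⟫ : ℝ) : ℂ) * I) by push_cast; ring,
            Complex.exp_add]
          ring
        simp_rw [hsplit]
        rw [integral_mul_const,
          GaussianFourier.integral_cexp_neg_mul_sq_norm_add (V := E d) hb (2 * ↑π * I) w]
        rw [finrank_euclideanSpace_fin, Kb]
        have hb0 : b ≠ 0 := fun h => by rw [h] at hb; simp at hb
        have h4 : ((2 * (π:ℂ) * I) ^ 2 * ‖w‖ ^ 2 / (4 * b) : ℂ)
            = -(π:ℂ) ^ 2 * ‖w‖ ^ 2 / b := by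
          have : ((2 * (π:ℂ) * I) ^ 2 : ℂ) = -(4 * (π:ℂ) ^ 2) := by
            rw [mul_pow, mul_pow, Complex.I_sq]; ring
          rw [this]
          field_simp
        rw [h4]
        ring


lemma vector_bound (g : SchwartzMap (E d) (E d)) (a : E d) {b : ℂ} (hb : 0 < b.re)
    {r : ℝ} (hr : 0 < r) (hrb : r ≤ ‖b‖) :
    Real.sqrt (∑ i, ‖∫ η, cexp (-b * ‖η‖ ^ 2) * ((g (η + a) i : ℝ) : ℂ)‖ ^ 2)
      ≤ (π / r) ^ ((d : ℝ) / 2) * ∫ w, ‖Psi g w‖ := by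
  set C := (π / r) ^ ((d : ℝ) / 2) with hC
  have hC0 : 0 ≤ C := by rw [hC]; positivity
  set Φ : E d → EuclideanSpace ℂ (Fin d) := fun w => Kb d b a w • Psi g w with hΦ
  have hΦnorm : ∀ w, ‖Φ w‖ ≤ C * ‖Psi g w‖ := by
    intro w
    rw [hΦ, norm_smul]
    exact mul_le_mul_of_nonneg_right (norm_Kb_le hb hr hrb a w) (norm_nonneg _)
  have hΦi : Integrable Φ := by
    refine Integrable.mono' ((integrable_normPsi g).const_mul C) ?_ ?_
    · exact ((continuous_Kb b a).smul (continuous_Psi g)).aestronglyMeasurable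
    · filter_upwards with w; exact hΦnorm w
  have hcomp : ∀ i : Fin d, (∫ w, Φ w) i = ∫ w, Kb d b a w * hatC g i w := by
    intro i
    have h := (EuclideanSpace.proj (𝕜 := ℂ) i).integral_comp_comm hΦi
    have h2 : (fun w => (EuclideanSpace.proj (𝕜 := ℂ) i) (Φ w))
        = fun w => Kb d b a w * hatC g i w := by
      funext w
      show Φ w i = _
      rw [hΦ]
      show Kb d b a w * Psi g w i = _
      rw [Psi_apply]
    rw [h2] at h
    exact h.symm
  have hLHS : (∑ i, ‖∫ η, cexp (-b * ‖η‖ ^ 2) * ((g (η + a) i : ℝ) : ℂ)‖ ^ 2)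
      = ∑ i, ‖(∫ w, Φ w) i‖ ^ 2 := by
    refine Finset.sum_congr rfl fun i _ => ?_
    have e1 : (∫ η, cexp (-b * ‖η‖ ^ 2) * ((g (η + a) i : ℝ) : ℂ))
        = ∫ η, cexp (-b * ‖η‖ ^ 2) * cComp g i (η + a) :=
      integral_congr_ae (ae_of_all _ fun η => by simp only [cComp_apply])
    rw [e1, key_identity g i a hb, ← hcomp i]
  rw [hLHS, ← EuclideanSpace.norm_eq]
  calc ‖∫ w, Φ w‖ ≤ ∫ w, ‖Φ w‖ := norm_integral_le_integral_norm _
    _ ≤ ∫ w, C * ‖Psi g w‖ :=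
        integral_mono hΦi.norm ((integrable_normPsi g).const_mul C) hΦnorm
    _ = C * ∫ w, ‖Psi g w‖ := integral_const_mul C _


lemma ftSi_eq (g : SchwartzMap (E d) (E d)) (i : Fin d) (x : E d) :
    ftSi g i x = ((2 * π) ^ (-(d : ℝ) / 2) : ℝ) * hatC g i ((2 * π)⁻¹ • x) := by
  rw [ftSi, hatC]
  congr 1
  rw [Real.fourier_eq']
  refine integral_congr_ae (ae_of_all _ fun η => ?_)
  simp only [smul_eq_mul, cComp_apply]
  congr 1
  have h2pi : (2 * π) ≠ 0 := by positivity
  have : (-2 * π * ⟪η, (2 * π)⁻¹ • x⟫ : ℝ) = -⟪x, η⟫ := by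
    rw [real_inner_smul_right, real_inner_comm]
    field_simp
  rw [this]
  push_cast
  ring

lemma norm_sum_ftSi (g : SchwartzMap (E d) (E d)) (x : E d) :
    Real.sqrt (∑ i, ‖ftSi g i x‖ ^ 2)
      = ((2 * π) ^ (-(d : ℝ) / 2) : ℝ) * ‖Psi g ((2 * π)⁻¹ • x)‖ := by
  have hc : (0:ℝ) ≤ ((2 * π) ^ (-(d : ℝ) / 2) : ℝ) := by positivity
  rw [norm_Psi]
  rw [← Real.sqrt_sq hc, ← Real.sqrt_mul (sq_nonneg _), Finset.mul_sum]
  congr 1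
  refine Finset.sum_congr rfl fun i _ => ?_
  rw [ftSi_eq, norm_mul, mul_pow]
  congr 2
  rw [Complex.norm_real, Real.norm_eq_abs, _root_.abs_of_nonneg hc]

lemma L_le (g : SchwartzMap (E d) (E d)) : ∫ w, ‖Psi g w‖ ≤ L1ftS g := by
  have h2pi : (0:ℝ) < 2 * π := by positivity
  have heq : L1ftS g = ((2 * π) ^ (-(d : ℝ) / 2) : ℝ) *
      ((2 * π) ^ d * ∫ w, ‖Psi g w‖) := by
    rw [L1ftS]
    simp_rw [norm_sum_ftSi g]
    rw [integral_const_mul]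
    congr 1
    have := MeasureTheory.Measure.integral_comp_inv_smul (volume : Measure (E d))
      (fun w => ‖Psi g w‖) (2 * π)
    rw [this, finrank_euclideanSpace_fin]
    rw [_root_.abs_of_nonneg (by positivity : (0:ℝ) ≤ (2 * π) ^ d)]
    rw [smul_eq_mul]
  have hfac : ((2 * π) ^ (-(d : ℝ) / 2) : ℝ) * (2 * π) ^ d = (2 * π) ^ ((d : ℝ) / 2) := by
    rw [← Real.rpow_natCast (2 * π) d, ← Real.rpow_add h2pi]
    congr 1
    ring
  have hone : (1:ℝ) ≤ (2 * π) ^ ((d : ℝ) / 2) := by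
    apply Real.one_le_rpow (by nlinarith [Real.pi_gt_three]) (by positivity)
  have hL0 : 0 ≤ ∫ w, ‖Psi g w‖ := integral_nonneg fun w => norm_nonneg _
  rw [heq, ← mul_assoc, hfac]
  nlinarith


lemma tendsto_J (g : SchwartzMap (E d) (E d)) (i : Fin d) (a : E d) {r : ℝ} (hr : 0 < r) :
    Tendsto (fun ε : ℝ => ∫ η, cexp (-((ε : ℂ) + (r : ℂ) * I) * ‖η‖ ^ 2) * ((g (η + a) i : ℝ) : ℂ))
      (𝓝[>] 0)
      (𝓝 (∫ η, cexp (-I * ((r * ‖η‖ ^ 2 : ℝ) : ℂ)) * ((g (η + a) i : ℝ) : ℂ))) := by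
  have htrans : Integrable (fun η : E d => cComp g i (η + a)) := by
    have h := (measurePreserving_add_right (volume : Measure (E d)) a).integrable_comp
      (cComp g i).continuous.aestronglyMeasurable
    exact h.2 (cComp g i).integrable
  refine tendsto_integral_filter_of_dominated_convergence
    (bound := fun η => ‖cComp g i (η + a)‖) ?_ ?_ htrans.norm ?_
  · filter_upwards with ε
    apply Continuous.aestronglyMeasurable
    apply Continuous.mul
    · exact Complex.continuous_exp.comp (by fun_prop)
    · exact Complex.continuous_ofReal.comp (by fun_prop)
  · filter_upwards [self_mem_nhdsWithin] with ε (hε : ε ∈ Ioi (0:ℝ))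
    refine ae_of_all _ fun η => ?_
    have hre : (-((ε : ℂ) + (r : ℂ) * I) * (‖η‖ : ℂ) ^ 2).re = -(ε * ‖η‖ ^ 2) := by
      have : (-((ε : ℂ) + (r : ℂ) * I) * (‖η‖ : ℂ) ^ 2)
          = ((-(ε * ‖η‖ ^ 2) : ℝ) : ℂ) + ((-(r * ‖η‖ ^ 2) : ℝ) : ℂ) * I := by
        push_cast; ring
      rw [this]
      simp [← Complex.ofReal_pow]
    rw [norm_mul, Complex.norm_exp, hre]
    have h1 : Real.exp (-(ε * ‖η‖ ^ 2)) ≤ 1 := by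
      rw [Real.exp_le_one_iff]
      have : (0:ℝ) ≤ ε * ‖η‖ ^ 2 := mul_nonneg (le_of_lt hε) (by positivity)
      linarith
    have h2 : ‖((g (η + a) i : ℝ) : ℂ)‖ = ‖cComp g i (η + a)‖ := by
      rw [cComp_apply]
    rw [h2]
    exact mul_le_of_le_one_left (norm_nonneg _) h1
  · refine ae_of_all _ fun η => ?_
    have hc : Continuous fun ε : ℝ => cexp (-((ε : ℂ) + (r : ℂ) * I) * (‖η‖ : ℂ) ^ 2) := by
      apply Complex.continuous_exp.comp
      fun_prop
    have h0 : Tendsto (fun ε : ℝ => cexp (-((ε : ℂ) + (r : ℂ) * I) * (‖η‖ : ℂ) ^ 2))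
        (𝓝[>] (0:ℝ)) (𝓝 (cexp (-(((0:ℝ) : ℂ) + (r : ℂ) * I) * (‖η‖ : ℂ) ^ 2))) :=
      (hc.tendsto 0).mono_left nhdsWithin_le_nhds
    have hval : cexp (-(((0:ℝ) : ℂ) + (r : ℂ) * I) * (‖η‖ : ℂ) ^ 2)
        = cexp (-I * ((r * ‖η‖ ^ 2 : ℝ) : ℂ)) := by
      congr 1
      push_cast
      ring
    rw [hval] at h0
    exact h0.mul_const _

end Statement5Aux

/-- for `d ≥ 1`, `g : ℝ^d → ℝ^d` Schwartz, `r > 0` and `a ∈ ℝ^d`,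
`|∫ e^{−i r |η|²} g(η + a) dη| ≤ (π/r)^{d/2} ‖ĝ‖_{L¹}`. -/
theorem statement5 (d : ℕ) (hd : 1 ≤ d) (g : SchwartzMap (E d) (E d)) :
    ∀ r : ℝ, 0 < r → ∀ a : E d,
      Real.sqrt (∑ i, ‖∫ η, Complex.exp (-Complex.I * (r * ‖η‖ ^ 2 : ℝ)) * ((g (η + a) i : ℝ) : ℂ)‖ ^ 2)
        ≤ (Real.pi / r) ^ ((d : ℝ) / 2) * L1ftS g := by
  intro r hr a
  classical
  set L : ℝ := ∫ w, ‖Statement5Aux.Psi g w‖ with hLdef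
  have hL : L ≤ L1ftS g := Statement5Aux.L_le g
  have hL0 : 0 ≤ L := integral_nonneg fun w => norm_nonneg _
  set C : ℝ := (Real.pi / r) ^ ((d : ℝ) / 2) with hCdef
  have hC0 : 0 ≤ C := by rw [hCdef]; positivity
  have hS : ∀ ε : ℝ, 0 < ε →
      Real.sqrt (∑ i, ‖∫ η, Complex.exp (-((ε : ℂ) + (r : ℂ) * Complex.I) * ‖η‖ ^ 2) *
        ((g (η + a) i : ℝ) : ℂ)‖ ^ 2) ≤ C * L := by
    intro ε hε
    refine Statement5Aux.vector_bound g a (b := (ε : ℂ) + (r : ℂ) * Complex.I) ?_ hr ?_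
    · simpa using hε
    · have him := Complex.abs_im_le_norm ((ε : ℂ) + (r : ℂ) * Complex.I)
      have : ((ε : ℂ) + (r : ℂ) * Complex.I).im = r := by simp
      rw [this] at him
      exact (le_abs_self r).trans him
  have htend : Tendsto (fun ε : ℝ =>
      Real.sqrt (∑ i, ‖∫ η, Complex.exp (-((ε : ℂ) + (r : ℂ) * Complex.I) * ‖η‖ ^ 2) *
        ((g (η + a) i : ℝ) : ℂ)‖ ^ 2)) (𝓝[>] 0)
      (𝓝 (Real.sqrt (∑ i, ‖∫ η, Complex.exp (-Complex.I * (r * ‖η‖ ^ 2 : ℝ)) *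
        ((g (η + a) i : ℝ) : ℂ)‖ ^ 2))) := by
    apply Filter.Tendsto.sqrt
    apply tendsto_finset_sum
    intro i _
    exact ((Statement5Aux.tendsto_J g i a hr).norm).pow 2
  refine le_of_tendsto htend ?_
  filter_upwards [self_mem_nhdsWithin] with ε (hε : ε ∈ Ioi (0:ℝ))
  exact (hS ε hε).trans (mul_le_mul_of_nonneg_left hL hC0)
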